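/- Let G be a fork-free graph containing an induced odd cycle H of length at least 7 and a vertex u outside H that has at least three neighbors on H, not all neighbors on H, and is adjacent to v4 but not v5 (for some numbering v1,...,v_ℓ of H). Then u is adjacent to v3. -/

import Mathlib

open SimpleGraph

/-- `v` enumerates the vertices of an induced cycle of length `n` in `G`:
`v` is injective and two listed vertices are adjacent iff they are consecutive. -/
def IsInducedCycle {V : Type*} (G : SimpleGraph V) (n : ℕ) (v : ZMod n → V) : Prop :=
  3 ≤ n ∧ Function.Injective v ∧
    ∀ i j : ZMod n, G.Adj (v i) (v j) ↔ (j = i + 1 ∨ i = j + 1)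

/-- An odd hole: an induced odd cycle of length at least 5. -/
def IsOddHole {V : Type*} (G : SimpleGraph V) (n : ℕ) (v : ZMod n → V) : Prop :=
  5 ≤ n ∧ Odd n ∧ IsInducedCycle G n v

/-- `G` contains an induced fork (chair): the tree on `{c,x,y,z,w}` with
edges `cx, cy, cz, zw`. -/
def HasInducedFork {V : Type*} (G : SimpleGraph V) : Prop :=
  ∃ c x y z w : V, ([c, x, y, z, w] : List V).Nodup ∧
    G.Adj c x ∧ G.Adj c y ∧ G.Adj c z ∧ G.Adj z w ∧
    ¬G.Adj x y ∧ ¬G.Adj x z ∧ ¬G.Adj y z ∧ ¬G.Adj c w ∧ ¬G.Adj x w ∧ ¬G.Adj y w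

/-- `G` contains an induced claw `K_{1,3}`. -/
def HasInducedClaw {V : Type*} (G : SimpleGraph V) : Prop :=
  ∃ c x y z : V, ([c, x, y, z] : List V).Nodup ∧
    G.Adj c x ∧ G.Adj c y ∧ G.Adj c z ∧ ¬G.Adj x y ∧ ¬G.Adj x z ∧ ¬G.Adj y z

/-- `G` contains an induced `W₅`: an induced 5-cycle plus a vertex adjacent to
all five cycle vertices. -/
def HasInducedW5 {V : Type*} (G : SimpleGraph V) : Prop :=
  ∃ (u : ZMod 5 → V) (h : V), Function.Injective u ∧ (∀ i, h ≠ u i) ∧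
    (∀ i j : ZMod 5, G.Adj (u i) (u j) ↔ (j = i + 1 ∨ i = j + 1)) ∧
    ∀ i, G.Adj h (u i)

/-- `S` is an independent set of `G`. -/
def IsIS {V : Type*} (G : SimpleGraph V) (S : Set V) : Prop :=
  ∀ ⦃a⦄, a ∈ S → ∀ ⦃b⦄, b ∈ S → ¬G.Adj a b

/-- `S` is a maximal independent set of `G`. -/
def MaxIS {V : Type*} (G : SimpleGraph V) (S : Set V) : Prop :=
  IsIS G S ∧ ∀ T, IsIS G T → S ⊆ T → T = S

/-- A vertex `u` outside an (induced) 5-cycle `v` has either exactly two consecutive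
neighbors on the cycle, or exactly three neighbors that are not three consecutive
vertices (the only such pattern on a 5-cycle being `{i, i+1, i+3}`). -/
def GoodAttach {V : Type*} (G : SimpleGraph V) (v : ZMod 5 → V) (u : V) : Prop :=
  (∃ i : ZMod 5, ∀ k, G.Adj u (v k) ↔ (k = i ∨ k = i + 1)) ∨
  (∃ i : ZMod 5, ∀ k, G.Adj u (v k) ↔ (k = i ∨ k = i + 1 ∨ k = i + 3))

/-- `U_i`: the vertices outside the 5-cycle adjacent to both `v_{i+2}` and `v_{i+3}`. -/
def Uset {V : Type*} (G : SimpleGraph V) (v : ZMod 5 → V) (i : ZMod 5) : Set V :=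
  {u | u ∉ Set.range v ∧ G.Adj u (v (i + 2)) ∧ G.Adj u (v (i + 3))}

/-- `U_i⁺ = U_i ∩ N(v_i)`. -/
def UsetP {V : Type*} (G : SimpleGraph V) (v : ZMod 5 → V) (i : ZMod 5) : Set V :=
  {u | u ∈ Uset G v i ∧ G.Adj u (v i)}

/-- `U_i⁻ = U_i \ N(v_i)`. -/
def UsetM {V : Type*} (G : SimpleGraph V) (v : ZMod 5 → V) (i : ZMod 5) : Set V :=
  {u | u ∈ Uset G v i ∧ ¬G.Adj u (v i)}

theorem stmt17 {V : Type*} (G : SimpleGraph V) (hfork : ¬HasInducedFork G)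
    (n : ℕ) (hn : 7 ≤ n) (hodd : Odd n)
    (v : ZMod n → V) (hH : IsInducedCycle G n v)
    (u : V) (hu : u ∉ Set.range v)
    (h3 : ∃ i j k : ZMod n, i ≠ j ∧ i ≠ k ∧ j ≠ k ∧
      G.Adj u (v i) ∧ G.Adj u (v j) ∧ G.Adj u (v k))
    (hnotall : ∃ i, ¬G.Adj u (v i))
    (h4 : G.Adj u (v 4)) (h5 : ¬G.Adj u (v 5)) :
    G.Adj u (v 3) := by
  classical
  obtain ⟨-, hinj, hA⟩ := hH
  set v' : ℕ → V := fun a => v a with hv'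
  have key : ∀ a b : ℕ, a < b → b - a < 7 → (a : ZMod n) ≠ (b : ZMod n) := by
    intro a b h1 h2 h
    rw [ZMod.natCast_eq_natCast_iff, Nat.modEq_iff_dvd' h1.le] at h
    exact absurd (Nat.le_of_dvd (by omega) h) (by omega)
  have vne : ∀ a b : ℕ, a < b → b - a < 7 → v' a ≠ v' b := by
    intro a b h1 h2 h
    exact key a b h1 h2 (hinj h)
  have une : ∀ a : ℕ, u ≠ v' a := fun a h => hu ⟨_, h.symm⟩
  have hAdj : ∀ a b : ℕ, a < b → b - a < 6 → (G.Adj (v' a) (v' b) ↔ b = a + 1) := by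
    intro a b h1 h2
    rw [hv']
    simp only [hA]
    constructor
    · rintro (h | h)
      · rw [show ((a : ZMod n) + 1) = ((a + 1 : ℕ) : ZMod n) by push_cast; ring,
          ZMod.natCast_eq_natCast_iff] at h
        have hd := (Nat.modEq_iff_dvd' (by omega : a + 1 ≤ b)).mp h.symm
        rcases Nat.eq_zero_or_pos (b - (a + 1)) with h0 | h0
        · omega
        · exact absurd (Nat.le_of_dvd h0 hd) (by omega)
      · rw [show ((b : ZMod n) + 1) = ((b + 1 : ℕ) : ZMod n) by push_cast; ring,
          ZMod.natCast_eq_natCast_iff] at h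
        have hd := (Nat.modEq_iff_dvd' (by omega : a ≤ b + 1)).mp h
        exact absurd (Nat.le_of_dvd (by omega) hd) (by omega)
    · intro h
      subst h
      left
      push_cast
      ring
  have c3 : v' 3 = v 3 := congrArg v (by norm_cast)
  have c4 : v' 4 = v 4 := congrArg v (by norm_cast)
  have c5 : v' 5 = v 5 := congrArg v (by norm_cast)
  have h4' : G.Adj u (v' 4) := by rw [c4]; exact h4
  have h5' : ¬ G.Adj u (v' 5) := by rw [c5]; exact h5
  rw [← c3]
  by_contra hu3
  have e23 : G.Adj (v' 2) (v' 3) := (hAdj 2 3 (by norm_num) (by norm_num)).mpr rfl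
  have e34 : G.Adj (v' 3) (v' 4) := (hAdj 3 4 (by norm_num) (by norm_num)).mpr rfl
  have e45 : G.Adj (v' 4) (v' 5) := (hAdj 4 5 (by norm_num) (by norm_num)).mpr rfl
  have e56 : G.Adj (v' 5) (v' 6) := (hAdj 5 6 (by norm_num) (by norm_num)).mpr rfl
  have e67 : G.Adj (v' 6) (v' 7) := (hAdj 6 7 (by norm_num) (by norm_num)).mpr rfl
  have n24 : ¬ G.Adj (v' 2) (v' 4) := fun h => by simpa using (hAdj 2 4 (by norm_num) (by norm_num)).mp h
  have n25 : ¬ G.Adj (v' 2) (v' 5) := fun h => by simpa using (hAdj 2 5 (by norm_num) (by norm_num)).mp h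
  have n26 : ¬ G.Adj (v' 2) (v' 6) := fun h => by simpa using (hAdj 2 6 (by norm_num) (by norm_num)).mp h
  have n27 : ¬ G.Adj (v' 2) (v' 7) := fun h => by simpa using (hAdj 2 7 (by norm_num) (by norm_num)).mp h
  have n35 : ¬ G.Adj (v' 3) (v' 5) := fun h => by simpa using (hAdj 3 5 (by norm_num) (by norm_num)).mp h
  have n36 : ¬ G.Adj (v' 3) (v' 6) := fun h => by simpa using (hAdj 3 6 (by norm_num) (by norm_num)).mp h
  have n46 : ¬ G.Adj (v' 4) (v' 6) := fun h => by simpa using (hAdj 4 6 (by norm_num) (by norm_num)).mp h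
  have n47 : ¬ G.Adj (v' 4) (v' 7) := fun h => by simpa using (hAdj 4 7 (by norm_num) (by norm_num)).mp h
  have n57 : ¬ G.Adj (v' 5) (v' 7) := fun h => by simpa using (hAdj 5 7 (by norm_num) (by norm_num)).mp h
  -- Step 1: u is adjacent to v2 (else fork on v4; u, v5, v3, v2)
  have hu2 : G.Adj u (v' 2) := by
    by_contra hc
    refine hfork ⟨v' 4, u, v' 5, v' 3, v' 2, ?_, h4'.symm, e45, e34.symm, e23.symm,
      h5', hu3, fun h => n35 h.symm, fun h => n24 h.symm, hc, fun h => n25 h.symm⟩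
    simp only [List.nodup_cons, List.mem_cons, List.not_mem_nil, or_false, List.nodup_nil,
      and_true, List.mem_singleton]
    push_neg
    and_intros <;>
      first
        | exact une _
        | exact Ne.symm (une _)
        | (apply vne <;> omega)
        | (apply Ne.symm; apply vne <;> omega)
        | trivial
  -- Step 2: u is adjacent to v6 (else fork on v4; u, v3, v5, v6)
  have hu6 : G.Adj u (v' 6) := by
    by_contra hc
    refine hfork ⟨v' 4, u, v' 3, v' 5, v' 6, ?_, h4'.symm, e34.symm, e45, e56,
      hu3, h5', n35, n46, hc, n36⟩
    simp only [List.nodup_cons, List.mem_cons, List.not_mem_nil, or_false, List.nodup_nil,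
      and_true, List.mem_singleton]
    push_neg
    and_intros <;>
      first
        | exact une _
        | exact Ne.symm (une _)
        | (apply vne <;> omega)
        | (apply Ne.symm; apply vne <;> omega)
        | trivial
  -- Step 3: u is adjacent to v7 (else fork on u; v2, v4, v6, v7)
  have hu7 : G.Adj u (v' 7) := by
    by_contra hc
    refine hfork ⟨u, v' 2, v' 4, v' 6, v' 7, ?_, hu2, h4', hu6, e67,
      n24, n26, n46, hc, n27, n47⟩
    simp only [List.nodup_cons, List.mem_cons, List.not_mem_nil, or_false, List.nodup_nil,
      and_true, List.mem_singleton]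
    push_neg
    and_intros <;>
      first
        | exact une _
        | exact Ne.symm (une _)
        | (apply vne <;> omega)
        | (apply Ne.symm; apply vne <;> omega)
        | trivial
  -- Final fork on u; v2, v7, v4, v5: contradiction
  refine hfork ⟨u, v' 2, v' 7, v' 4, v' 5, ?_, hu2, hu7, h4', e45,
    n27, n24, fun h => n47 h.symm, h5', n25, fun h => n57 h.symm⟩
  simp only [List.nodup_cons, List.mem_cons, List.not_mem_nil, or_false, List.nodup_nil,
    and_true, List.mem_singleton]
  push_neg
  and_intros <;>
    first
      | exact une _
      | exact Ne.symm (une _)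
      | (apply vne <;> omega)
      | (apply Ne.symm; apply vne <;> omega)
      | trivial
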